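/- (Corollary 1) Suppose F is mixed-monotone with respect to a decomposition function d, and suppose (x_eq, x̂_eq) with x_eq ⪯ x̂_eq is an asymptotically stable equilibrium of the deterministic embedding system (ẋ, ẋ̂) = e(x, x̂) whose basin of attraction is 𝒞 ⊆ ℝⁿ × ℝⁿ. Then [x_eq, x̂_eq] is robustly forward invariant for ẋ = F(x, w), and for every (a, â) ∈ 𝒞 with a ⪯ â, the set [x_eq, x̂_eq] is attractive from [a, â]: for every solution x : [0, ∞) → ℝⁿ of ẋ = F(x, w(t)) under a piecewise continuous disturbance valued in 𝒲 with x(0) ∈ [a, â], and every open set U ⊇ [x_eq, x̂_eq], there exists T > 0 with x(t) ∈ U for all t ≥ T. In particular, if 𝒞 contains the whole upper triangle {(a, â) : a ⪯ â}, then [x_eq, x̂_eq] is globally attractive for ẋ = F(x, w). -/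

import Mathlib

open Set Function Filter Topology

/-- A function is piecewise continuous on a set `s` if it is continuous on `s` off of
finitely many points. -/
def PiecewiseContinuousOn {α : Type*} [TopologicalSpace α] (w : ℝ → α) (s : Set ℝ) : Prop :=
  ∃ E : Finset ℝ, ContinuousOn w (s \ (E : Set ℝ))

/-- `d` is a decomposition function for the vector field `F` on state space `ℝⁿ` with
disturbance set `𝒲 = Set.Icc wl wu ⊆ ℝᵐ`:  `d` is locally Lipschitz, agrees with `F` on the
diagonal, `dᵢ` is nondecreasing in `xⱼ` for `j ≠ i`, nonincreasing in every component of `x̂`,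
nondecreasing in every component of `w` and nonincreasing in every component of `ŵ`. -/
def IsDecompositionFunction {n m : ℕ} (wl wu : Fin m → ℝ)
    (F : (Fin n → ℝ) → (Fin m → ℝ) → (Fin n → ℝ))
    (d : (Fin n → ℝ) → (Fin m → ℝ) → (Fin n → ℝ) → (Fin m → ℝ) → (Fin n → ℝ)) : Prop :=
  LocallyLipschitz
      (fun p : ((Fin n → ℝ) × (Fin m → ℝ)) × ((Fin n → ℝ) × (Fin m → ℝ)) =>
        d p.1.1 p.1.2 p.2.1 p.2.2)
    ∧ (∀ x : Fin n → ℝ, ∀ w ∈ Set.Icc wl wu, d x w x w = F x w)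
    ∧ (∀ (i j : Fin n), j ≠ i → ∀ (x xh : Fin n → ℝ) (s t : ℝ), s ≤ t →
        ∀ w ∈ Set.Icc wl wu, ∀ wh ∈ Set.Icc wl wu,
          d (Function.update x j s) w xh wh i ≤ d (Function.update x j t) w xh wh i)
    ∧ (∀ (i j : Fin n) (x xh : Fin n → ℝ) (s t : ℝ), s ≤ t →
        ∀ w ∈ Set.Icc wl wu, ∀ wh ∈ Set.Icc wl wu,
          d x w (Function.update xh j t) wh i ≤ d x w (Function.update xh j s) wh i)
    ∧ (∀ (i : Fin n) (k : Fin m) (x xh : Fin n → ℝ) (s t : ℝ),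
        wl k ≤ s → s ≤ t → t ≤ wu k →
        ∀ w ∈ Set.Icc wl wu, ∀ wh ∈ Set.Icc wl wu,
          d x (Function.update w k s) xh wh i ≤ d x (Function.update w k t) xh wh i)
    ∧ (∀ (i : Fin n) (k : Fin m) (x xh : Fin n → ℝ) (s t : ℝ),
        wl k ≤ s → s ≤ t → t ≤ wu k →
        ∀ w ∈ Set.Icc wl wu, ∀ wh ∈ Set.Icc wl wu,
          d x w xh (Function.update wh k t) i ≤ d x w xh (Function.update wh k s) i)

/-- A global-in-forward-time solution of the deterministic embedding system
`(ẋ, ẋ̂) = e(x, x̂) = (d(x, w̲, x̂, w̄), d(x̂, w̄, x, w̲))`. -/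
def EmbeddingSol {n m : ℕ} (wl wu : Fin m → ℝ)
    (d : (Fin n → ℝ) → (Fin m → ℝ) → (Fin n → ℝ) → (Fin m → ℝ) → (Fin n → ℝ))
    (a ah : ℝ → (Fin n → ℝ)) : Prop :=
  ∀ t ∈ Set.Ici (0:ℝ),
    HasDerivAt a (d (a t) wl (ah t) wu) t ∧ HasDerivAt ah (d (ah t) wu (a t) wl) t



/-- Chain lemma: coordinatewise update monotonicity implies monotonicity. -/
lemma chain_le {ν : ℕ} (p q : Fin ν → ℝ) (G : (Fin ν → ℝ) → ℝ)
    (step : ∀ (k : Fin ν) (z : Fin ν → ℝ), (∀ j, z j = p j ∨ z j = q j) →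
      G (Function.update z k (p k)) ≤ G (Function.update z k (q k))) :
    G p ≤ G q := by
  set mix : ℕ → Fin ν → ℝ := fun k j => if (j : ℕ) < k then q j else p j with hmix
  have hmem : ∀ k j, mix k j = p j ∨ mix k j = q j := by
    intro k j; by_cases h : (j : ℕ) < k <;> simp [hmix, h]
  have hstep : ∀ k : ℕ, G (mix k) ≤ G (mix (k + 1)) := by
    intro k
    by_cases hk : k < ν
    · have h1 : mix k = Function.update (mix k) ⟨k, hk⟩ (p ⟨k, hk⟩) := by
        funext j
        rcases eq_or_ne j ⟨k, hk⟩ with rfl | hj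
        · simp [hmix]
        · simp [Function.update_of_ne hj]
      have h2 : mix (k + 1) = Function.update (mix k) ⟨k, hk⟩ (q ⟨k, hk⟩) := by
        funext j
        rcases eq_or_ne j ⟨k, hk⟩ with rfl | hj
        · simp [hmix]
        · have : (j : ℕ) ≠ k := fun h => hj (Fin.ext h)
          have : ((j : ℕ) < k + 1) ↔ ((j : ℕ) < k) := by omega
          simp [Function.update_of_ne hj, hmix, this]
      calc G (mix k) = G (Function.update (mix k) ⟨k, hk⟩ (p ⟨k, hk⟩)) := by rw [← h1]
        _ ≤ G (Function.update (mix k) ⟨k, hk⟩ (q ⟨k, hk⟩)) := step ⟨k, hk⟩ (mix k) (hmem k)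
        _ = G (mix (k+1)) := by rw [← h2]
    · have : mix (k + 1) = mix k := by
        funext j
        have hj1 : (j : ℕ) < k := lt_of_lt_of_le j.isLt (le_of_not_gt hk)
        have hj2 : (j : ℕ) < k + 1 := by omega
        simp [hmix, hj1, hj2]
      rw [this]
  have hall : ∀ k : ℕ, G (mix 0) ≤ G (mix k) := by
    intro k; induction k with
    | zero => exact le_refl _
    | succ k ih => exact ih.trans (hstep k)
  have h0 : mix 0 = p := by funext j; simp [hmix]
  have hν : mix ν = q := by funext j; simp [hmix, j.isLt]
  have := hall ν
  rw [h0, hν] at this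
  exact this


/-- A locally Lipschitz map into a metric space is Lipschitz on every closed ball of a
real normed space. -/
lemma locallyLipschitz_lipschitzOnWith_closedBall {E β : Type*} [NormedAddCommGroup E]
    [NormedSpace ℝ E] [ProperSpace E] [PseudoMetricSpace β] {f : E → β}
    (hf : LocallyLipschitz f) (x₀ : E) (R : ℝ) :
    ∃ L : NNReal, LipschitzOnWith L f (Metric.closedBall x₀ R) := by
  set K := Metric.closedBall x₀ R with hK
  have hKc : IsCompact K := isCompact_closedBall x₀ R
  -- around each point of K pick an open ball on which f is Lipschitz
  have hballs : ∀ p : E, ∃ r : ℝ, 0 < r ∧ ∃ Lp : NNReal,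
      LipschitzOnWith Lp f (Metric.ball p r) := by
    intro p
    obtain ⟨Lp, t, ht, hLp⟩ := hf p
    obtain ⟨r, hr, hball⟩ := Metric.mem_nhds_iff.1 ht
    exact ⟨r, hr, Lp, hLp.mono hball⟩
  choose r hr Lc hLc using hballs
  -- finite subcover by half-radius balls
  have hcover : K ⊆ ⋃ p ∈ K, Metric.ball p (r p / 2) := by
    intro p hp
    exact Set.mem_biUnion hp (Metric.mem_ball_self (by linarith [hr p]))
  obtain ⟨S, hS⟩ := hKc.elim_finite_subcover_image
    (fun p _ => Metric.isOpen_ball) hcover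
  obtain ⟨hSK, hSfin, hScov⟩ := hS
  rcases Set.eq_empty_or_nonempty K with hKe | hKne
  · exact ⟨1, fun u hu => by rw [hKe] at hu; exact absurd hu (Set.notMem_empty _)⟩
  have hR : 0 ≤ R := by
    obtain ⟨u, hu⟩ := hKne
    have := Metric.mem_closedBall.1 hu
    linarith [dist_nonneg (x := u) (y := x₀)]
  have hSne : hSfin.toFinset.Nonempty := by
    obtain ⟨u, hu⟩ := hKne
    obtain ⟨p, hp, _⟩ := Set.mem_iUnion₂.1 (hScov hu)
    exact ⟨p, hSfin.mem_toFinset.2 hp⟩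
  set δ : ℝ := hSfin.toFinset.inf' hSne (fun p => r p / 2) with hδdef
  have hδpos : 0 < δ := by
    rw [hδdef]
    apply (Finset.lt_inf'_iff hSne).2
    intro p _
    linarith [hr p]
  set L₀ : NNReal := hSfin.toFinset.sup (fun p => Lc p) with hL₀def
  refine ⟨L₀, LipschitzOnWith.of_dist_le_mul fun u hu v hv => ?_⟩
  set D := dist u v with hD
  have hDnn : 0 ≤ D := dist_nonneg
  set N : ℕ := ⌈D / δ⌉₊ + 1 with hN
  have hNpos : 0 < (N : ℝ) := by positivity
  have hDN : D / N ≤ δ := by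
    rw [div_le_iff₀ hNpos]
    have h1 : D / δ ≤ (⌈D / δ⌉₊ : ℝ) := Nat.le_ceil _
    have h2 : ((⌈D / δ⌉₊ : ℝ)) ≤ (N : ℝ) - 1 := by
      rw [hN]; push_cast; linarith
    have h3 : D / δ ≤ (N : ℝ) := by linarith
    have h4 : (D / δ) * δ ≤ (N:ℝ) * δ := mul_le_mul_of_nonneg_right h3 (le_of_lt hδpos)
    have h5 : (D / δ) * δ = D := by field_simp
    linarith [h4, h5]
  set γ : ℕ → E := fun k => u + ((k : ℝ) / N) • (v - u) with hγ
  have hγ0 : γ 0 = u := by simp [hγ]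
  have hγN : γ N = v := by
    have : ((N : ℝ) / N) = 1 := div_self (ne_of_gt hNpos)
    simp [hγ, this]
  have hγK : ∀ k, k ≤ N → γ k ∈ K := by
    intro k hk
    have hlam0 : 0 ≤ (k : ℝ) / N := by positivity
    have hlam1 : (k : ℝ) / N ≤ 1 := by
      rw [div_le_one hNpos]; exact_mod_cast hk
    rw [hK, Metric.mem_closedBall, dist_eq_norm]
    have heq : γ k - x₀ = (1 - (k : ℝ)/N) • (u - x₀) + ((k : ℝ)/N) • (v - x₀) := by
      rw [hγ]
      module
    rw [heq]
    calc ‖(1 - (k : ℝ)/N) • (u - x₀) + ((k : ℝ)/N) • (v - x₀)‖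
        ≤ ‖(1 - (k : ℝ)/N) • (u - x₀)‖ + ‖((k : ℝ)/N) • (v - x₀)‖ := norm_add_le _ _
      _ = (1 - (k : ℝ)/N) * ‖u - x₀‖ + ((k : ℝ)/N) * ‖v - x₀‖ := by
          rw [norm_smul, norm_smul, Real.norm_eq_abs, Real.norm_eq_abs,
            abs_of_nonneg (by linarith), abs_of_nonneg hlam0]
      _ ≤ (1 - (k : ℝ)/N) * R + ((k : ℝ)/N) * R := by
          have h1 : ‖u - x₀‖ ≤ R := by rw [← dist_eq_norm]; exact Metric.mem_closedBall.1 hu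
          have h2 : ‖v - x₀‖ ≤ R := by rw [← dist_eq_norm]; exact Metric.mem_closedBall.1 hv
          have := mul_le_mul_of_nonneg_left h1 (by linarith : (0:ℝ) ≤ 1 - (k : ℝ)/N)
          have := mul_le_mul_of_nonneg_left h2 hlam0
          linarith
      _ = R := by ring
  have hstep : ∀ k, dist (γ k) (γ (k + 1)) = D / N := by
    intro k
    have h1 : γ (k+1) - γ k = ((1 : ℝ) / N) • (v - u) := by
      rw [hγ]; push_cast; module
    rw [dist_eq_norm, ← neg_sub, norm_neg, h1, norm_smul, Real.norm_eq_abs,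
      abs_of_nonneg (by positivity : (0:ℝ) ≤ 1 / N), hD, dist_eq_norm, ← neg_sub, norm_neg]
    ring
  have hsb : ∀ k, k < N → dist (f (γ k)) (f (γ (k + 1))) ≤ (L₀ : ℝ) * (D / N) := by
    intro k hk
    obtain ⟨p, hp, hγkp⟩ := Set.mem_iUnion₂.1 (hScov (hγK k (le_of_lt hk)))
    have hpS : p ∈ hSfin.toFinset := hSfin.mem_toFinset.2 hp
    have hδp : δ ≤ r p / 2 := Finset.inf'_le _ hpS
    have hk1 : γ k ∈ Metric.ball p (r p) := by
      apply Metric.mem_ball.2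
      have := Metric.mem_ball.1 hγkp
      linarith [hr p]
    have hk2 : γ (k+1) ∈ Metric.ball p (r p) := by
      apply Metric.mem_ball.2
      have h1 := Metric.mem_ball.1 hγkp
      calc dist (γ (k+1)) p ≤ dist (γ (k+1)) (γ k) + dist (γ k) p := dist_triangle _ _ _
        _ = dist (γ k) (γ (k+1)) + dist (γ k) p := by rw [dist_comm]
        _ < D / N + r p / 2 := by linarith [hstep k]
        _ ≤ r p := by linarith
    have hLst := (hLc p).dist_le_mul _ hk1 _ hk2
    rw [hstep k] at hLst
    calc dist (f (γ k)) (f (γ (k+1))) ≤ (Lc p : ℝ) * (D / N) := hLst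
      _ ≤ (L₀ : ℝ) * (D / N) := by
        apply mul_le_mul_of_nonneg_right _ (by positivity)
        exact_mod_cast Finset.le_sup (f := fun p => Lc p) hpS
  calc dist (f u) (f v) = dist (f (γ 0)) (f (γ N)) := by rw [hγ0, hγN]
    _ ≤ ∑ k ∈ Finset.range N, dist (f (γ k)) (f (γ (k + 1))) := dist_le_range_sum_dist (fun k => f (γ k)) N
    _ ≤ ∑ k ∈ Finset.range N, (L₀ : ℝ) * (D / N) := by
        apply Finset.sum_le_sum
        intro k hk
        exact hsb k (Finset.mem_range.1 hk)
    _ = (N : ℝ) * ((L₀ : ℝ) * (D / N)) := by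
        rw [Finset.sum_const, Finset.card_range, nsmul_eq_mul]
    _ = (L₀ : ℝ) * D := by
        field_simp


section Mono
variable {n m : ℕ} {wl wu : Fin m → ℝ}
  {F : (Fin n → ℝ) → (Fin m → ℝ) → (Fin n → ℝ)}
  {d : (Fin n → ℝ) → (Fin m → ℝ) → (Fin n → ℝ) → (Fin m → ℝ) → (Fin n → ℝ)}

lemma dw_mono (hd : IsDecompositionFunction wl wu F d) (i : Fin n) (x xh : Fin n → ℝ)
    {w' w'' wh : Fin m → ℝ} (h1 : w' ∈ Set.Icc wl wu) (h2 : w'' ∈ Set.Icc wl wu)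
    (h3 : wh ∈ Set.Icc wl wu) (hle : w' ≤ w'') :
    d x w' xh wh i ≤ d x w'' xh wh i := by
  apply chain_le w' w'' (fun z => d x z xh wh i)
  intro k z hz
  have hzI : z ∈ Set.Icc wl wu := by
    constructor <;> intro j <;> rcases hz j with h | h <;> rw [h]
    · exact h1.1 j
    · exact h2.1 j
    · exact h1.2 j
    · exact h2.2 j
  exact hd.2.2.2.2.1 i k x xh (w' k) (w'' k) (h1.1 k) (hle k) (h2.2 k) z hzI wh h3

lemma dwh_anti (hd : IsDecompositionFunction wl wu F d) (i : Fin n) (x xh : Fin n → ℝ)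
    {w wh' wh'' : Fin m → ℝ} (h1 : wh' ∈ Set.Icc wl wu) (h2 : wh'' ∈ Set.Icc wl wu)
    (h3 : w ∈ Set.Icc wl wu) (hle : wh' ≤ wh'') :
    d x w xh wh'' i ≤ d x w xh wh' i := by
  apply chain_le wh'' wh' (fun z => d x w xh z i)
  intro k z hz
  have hzI : z ∈ Set.Icc wl wu := by
    constructor <;> intro j <;> rcases hz j with h | h <;> rw [h]
    · exact h2.1 j
    · exact h1.1 j
    · exact h2.2 j
    · exact h1.2 j
  exact hd.2.2.2.2.2 i k x xh (wh' k) (wh'' k) (h1.1 k) (hle k) (h2.2 k) w h3 z hzI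

lemma dxh_anti (hd : IsDecompositionFunction wl wu F d) (i : Fin n) (x : Fin n → ℝ)
    {xh' xh'' : Fin n → ℝ} {w wh : Fin m → ℝ} (h3 : w ∈ Set.Icc wl wu)
    (h4 : wh ∈ Set.Icc wl wu) (hle : xh' ≤ xh'') :
    d x w xh'' wh i ≤ d x w xh' wh i := by
  apply chain_le xh'' xh' (fun z => d x w z wh i)
  intro k z _
  exact hd.2.2.2.1 i k x z (xh' k) (xh'' k) (hle k) w h3 wh h4

lemma dx_mono (hd : IsDecompositionFunction wl wu F d) (i : Fin n)
    {y x' : Fin n → ℝ} (xh : Fin n → ℝ) {w wh : Fin m → ℝ} (h3 : w ∈ Set.Icc wl wu)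
    (h4 : wh ∈ Set.Icc wl wu) (hle : y ≤ x') (hi : y i = x' i) :
    d y w xh wh i ≤ d x' w xh wh i := by
  apply chain_le y x' (fun z => d z w xh wh i)
  intro k z _
  rcases eq_or_ne k i with rfl | hk
  · rw [hi]
  · exact hd.2.2.1 i k hk z xh (y k) (x' k) (hle k) w h3 wh h4

end Mono

lemma deriv_nonpos_of_left_nonneg {g : ℝ → ℝ} {τ D : ℝ} (hτ : 0 < τ)
    (hg : HasDerivAt g D τ) (h0 : g τ = 0) (hge : ∀ t, 0 ≤ t → t < τ → 0 ≤ g t) :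
    D ≤ 0 := by
  have hs := hasDerivAt_iff_tendsto_slope.1 hg
  have hmono : 𝓝[<] τ ≤ 𝓝[≠] τ := nhdsWithin_mono τ (fun t ht => ne_of_lt ht)
  have hs' : Filter.Tendsto (slope g τ) (𝓝[<] τ) (𝓝 D) := hs.mono_left hmono
  apply le_of_tendsto hs'
  filter_upwards [Ioo_mem_nhdsLT_of_mem (⟨hτ, le_refl τ⟩ : τ ∈ Set.Ioc 0 τ)] with t ht
  have h1 : 0 ≤ g t := hge t ht.1.le ht.2
  have h2 : t - τ < 0 := by linarith [ht.2]
  rw [slope_def_field]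
  apply div_nonpos_of_nonneg_of_nonpos <;> linarith

lemma comparison {n m : ℕ} (wl wu : Fin m → ℝ) (hwlu : wl ≤ wu)
    (F : (Fin n → ℝ) → (Fin m → ℝ) → (Fin n → ℝ))
    (d : (Fin n → ℝ) → (Fin m → ℝ) → (Fin n → ℝ) → (Fin m → ℝ) → (Fin n → ℝ))
    (hd : IsDecompositionFunction wl wu F d)
    (a ah : ℝ → (Fin n → ℝ)) (hsol : EmbeddingSol wl wu d a ah)
    (T : ℝ) (hT : 0 ≤ T)
    (x : ℝ → (Fin n → ℝ)) (w : ℝ → (Fin m → ℝ))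
    (hw : ∀ t ∈ Set.Icc (0:ℝ) T, w t ∈ Set.Icc wl wu)
    (hx : ∀ t ∈ Set.Icc (0:ℝ) T, HasDerivAt x (F (x t) (w t)) t)
    (h0l : a 0 ≤ x 0) (h0u : x 0 ≤ ah 0) :
    ∀ t ∈ Set.Icc (0:ℝ) T, a t ≤ x t ∧ x t ≤ ah t := by
  have hwlI : wl ∈ Set.Icc wl wu := ⟨le_refl _, hwlu⟩
  have hwuI : wu ∈ Set.Icc wl wu := ⟨hwlu, le_refl _⟩
  -- continuity of x, a, ah on [0, T]
  have hcx : ∀ t ∈ Set.Icc (0:ℝ) T, ContinuousAt x t := fun t ht => (hx t ht).continuousAt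
  have hca : ∀ t ∈ Set.Icc (0:ℝ) T, ContinuousAt a t :=
    fun t ht => ((hsol t ht.1).1).continuousAt
  have hcah : ∀ t ∈ Set.Icc (0:ℝ) T, ContinuousAt ah t :=
    fun t ht => ((hsol t ht.1).2).continuousAt
  -- a uniform bound R on the trajectories and the disturbance bounds
  obtain ⟨R, hR⟩ : ∃ R : ℝ, ∀ t ∈ Set.Icc (0:ℝ) T,
      ‖x t‖ ≤ R ∧ ‖a t‖ ≤ R ∧ ‖ah t‖ ≤ R ∧ ‖wl‖ ≤ R ∧ ‖wu‖ ≤ R := by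
    have hcont : ContinuousOn (fun t => (x t, (a t, ah t))) (Set.Icc (0:ℝ) T) := by
      intro t ht
      exact (((hcx t ht).prodMk ((hca t ht).prodMk (hcah t ht)))).continuousWithinAt
    obtain ⟨C, hC⟩ := isCompact_Icc.exists_bound_of_continuousOn hcont
    refine ⟨max C (max ‖wl‖ ‖wu‖), fun t ht => ?_⟩
    have h1 := hC t ht
    have hx1 : ‖x t‖ ≤ C := le_trans (norm_fst_le ((x t, (a t, ah t)))) h1
    have ha1 : ‖a t‖ ≤ C :=
      le_trans (le_trans (norm_fst_le ((a t, ah t))) (norm_snd_le ((x t, (a t, ah t))))) h1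
    have hah1 : ‖ah t‖ ≤ C :=
      le_trans (le_trans (norm_snd_le ((a t, ah t))) (norm_snd_le ((x t, (a t, ah t))))) h1
    refine ⟨le_trans hx1 (le_max_left _ _), le_trans ha1 (le_max_left _ _),
      le_trans hah1 (le_max_left _ _), ?_, ?_⟩
    · exact le_trans (le_max_left _ _) (le_max_right _ _)
    · exact le_trans (le_max_right _ _) (le_max_right _ _)
  have hRnn : 0 ≤ R := le_trans (norm_nonneg _) (hR 0 ⟨le_refl _, hT⟩).1
  -- Lipschitz constant for d on a large ball
  obtain ⟨L, hL⟩ := locallyLipschitz_lipschitzOnWith_closedBall hd.1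
    (0 : ((Fin n → ℝ) × (Fin m → ℝ)) × ((Fin n → ℝ) × (Fin m → ℝ))) (R + 1)
  set c : ℝ := (L : ℝ) + 1 with hc
  have hcpos : 0 < c := by positivity
  set ε₀ : ℝ := Real.exp (-(c * T)) with hε₀
  have hε₀pos : 0 < ε₀ := Real.exp_pos _
  -- the key ε-inflated claim
  have key : ∀ ε : ℝ, 0 < ε → ε ≤ ε₀ → ∀ t ∈ Set.Icc (0:ℝ) T, ∀ i : Fin n,
      a t i - ε * Real.exp (c * t) ≤ x t i ∧ x t i ≤ ah t i + ε * Real.exp (c * t) := by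
    intro ε hεpos hεle
    by_contra hcon
    push_neg at hcon
    set E : ℝ → ℝ := fun t => ε * Real.exp (c * t) with hE
    have hEpos : ∀ t, 0 < E t := fun t => by
      have := Real.exp_pos (c * t); simp only [hE]; positivity
    have hcE : Continuous E :=
      continuous_const.mul (Real.continuous_exp.comp (continuous_const.mul continuous_id))
    set B : Set ℝ := {t ∈ Set.Icc (0:ℝ) T | ∃ i, x t i < a t i - E t ∨ ah t i + E t < x t i}
      with hB
    have hBne : B.Nonempty := by
      obtain ⟨t, ht, i, hi⟩ := hcon
      refine ⟨t, ht, i, ?_⟩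
      rcases lt_or_ge (x t i) (a t i - E t) with h | h
      · exact Or.inl h
      · exact Or.inr (hi h)
    set τ := sInf B with hτ
    have hBsub : B ⊆ Set.Icc (0:ℝ) T := fun t ht => ht.1
    have hBbdd : BddBelow B := ⟨0, fun t ht => (hBsub ht).1⟩
    have hτmem : τ ∈ Set.Icc (0:ℝ) T := by
      constructor
      · exact le_csInf hBne (fun t ht => (hBsub ht).1)
      · obtain ⟨b, hb⟩ := hBne
        exact le_trans (csInf_le hBbdd hb) (hBsub hb).2
    have hgoodlt : ∀ t, 0 ≤ t → t < τ → ∀ i,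
        a t i - E t ≤ x t i ∧ x t i ≤ ah t i + E t := by
      intro t h0 hlt i
      have htI : t ∈ Set.Icc (0:ℝ) T := ⟨h0, le_trans hlt.le hτmem.2⟩
      have hnot : t ∉ B := fun hmem => absurd (csInf_le hBbdd hmem) (not_le.2 hlt)
      constructor
      · by_contra h; exact hnot ⟨htI, i, Or.inl (not_le.1 h)⟩
      · by_contra h; exact hnot ⟨htI, i, Or.inr (not_le.1 h)⟩
    have hcxi : ∀ i : Fin n, ContinuousAt (fun t => x t i) τ :=
      fun i => (continuous_apply i).continuousAt.comp (hcx τ hτmem)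
    have hcai : ∀ i : Fin n, ContinuousAt (fun t => a t i) τ :=
      fun i => (continuous_apply i).continuousAt.comp (hca τ hτmem)
    have hcahi : ∀ i : Fin n, ContinuousAt (fun t => ah t i) τ :=
      fun i => (continuous_apply i).continuousAt.comp (hcah τ hτmem)
    have hgoodτ : ∀ i, a τ i - E τ ≤ x τ i ∧ x τ i ≤ ah τ i + E τ := by
      rcases eq_or_lt_of_le hτmem.1 with heq0 | hτpos
      · intro i
        have hE0 : E 0 = ε := by simp [hE]
        rw [← heq0]
        constructor
        · rw [hE0]; linarith [h0l i, hεpos]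
        · rw [hE0]; linarith [h0u i, hεpos]
      · have hlim : ∀ h : ℝ → ℝ, ContinuousAt h τ → (∀ t, 0 ≤ t → t < τ → 0 ≤ h t) →
            0 ≤ h τ := by
          intro h hch hht
          have ht' : Filter.Tendsto h (𝓝[<] τ) (𝓝 (h τ)) :=
            hch.tendsto.mono_left nhdsWithin_le_nhds
          apply ge_of_tendsto ht'
          filter_upwards [Ioo_mem_nhdsLT_of_mem (⟨hτpos, le_refl τ⟩ : τ ∈ Set.Ioc 0 τ)]
            with t ht2
          exact hht t ht2.1.le ht2.2
        intro i
        constructor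
        · have h1 : (0:ℝ) ≤ x τ i - (a τ i - E τ) := hlim (fun t => x t i - (a t i - E t))
            (((hcxi i).sub ((hcai i).sub hcE.continuousAt)))
            (fun t h0 hlt => by
              show (0:ℝ) ≤ x t i - (a t i - E t)
              linarith [(hgoodlt t h0 hlt i).1])
          linarith
        · have h1 : (0:ℝ) ≤ (ah τ i + E τ) - x τ i := hlim (fun t => (ah t i + E t) - x t i)
            ((((hcahi i).add hcE.continuousAt).sub (hcxi i)))
            (fun t h0 hlt => by
              show (0:ℝ) ≤ (ah t i + E t) - x t i
              linarith [(hgoodlt t h0 hlt i).2])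
          linarith
    have hbadτ : ∃ i, x τ i ≤ a τ i - E τ ∨ ah τ i + E τ ≤ x τ i := by
      by_contra hno
      push_neg at hno
      have hev : ∀ᶠ t in 𝓝 τ, ∀ i : Fin n, a t i - E t < x t i ∧ x t i < ah t i + E t := by
        rw [Filter.eventually_all]
        intro i
        have h1 : ContinuousAt (fun t => x t i - (a t i - E t)) τ :=
          ((hcxi i).sub ((hcai i).sub hcE.continuousAt))
        have h2 : ContinuousAt (fun t => (ah t i + E t) - x t i) τ :=
          (((hcahi i).add hcE.continuousAt).sub (hcxi i))
        have hp1 : (0:ℝ) < x τ i - (a τ i - E τ) := by linarith [(hno i).1]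
        have hp2 : (0:ℝ) < (ah τ i + E τ) - x τ i := by linarith [(hno i).2]
        have e1 := h1.eventually (eventually_gt_nhds hp1)
        have e2 := h2.eventually (eventually_gt_nhds hp2)
        filter_upwards [e1, e2] with t ht1 ht2
        constructor <;> linarith
      rw [Metric.eventually_nhds_iff] at hev
      obtain ⟨δ, hδpos, hδ⟩ := hev
      have hlb : ∀ b ∈ B, τ + δ/2 ≤ b := by
        intro b hb
        by_contra hlt
        push_neg at hlt
        have hgeb : τ ≤ b := csInf_le hBbdd hb
        have hdb : dist b τ < δ := by
          rw [Real.dist_eq, abs_of_nonneg (by linarith)]; linarith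
        obtain ⟨i, hi⟩ := hb.2
        have h3 := hδ hdb i
        rcases hi with h | h <;> linarith [h3.1, h3.2]
      have : τ + δ/2 ≤ τ := le_csInf hBne hlb
      linarith
    obtain ⟨i, hi⟩ := hbadτ
    have hwτ := hw τ hτmem
    have hxdi : HasDerivAt (fun t => x t i) (F (x τ) (w τ) i) τ :=
      hasDerivAt_pi.1 (hx τ hτmem) i
    have hadi : HasDerivAt (fun t => a t i) (d (a τ) wl (ah τ) wu i) τ :=
      hasDerivAt_pi.1 (hsol τ hτmem.1).1 i
    have hahdi : HasDerivAt (fun t => ah t i) (d (ah τ) wu (a τ) wl i) τ :=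
      hasDerivAt_pi.1 (hsol τ hτmem.1).2 i
    have hEd : HasDerivAt E (c * E τ) τ := by
      have h1 : HasDerivAt (fun t : ℝ => c * t) (c * 1) τ := (hasDerivAt_id τ).const_mul c
      have h2 := (h1.exp).const_mul ε
      have h3 : ε * (Real.exp (c * τ) * (c * 1)) = c * E τ := by simp [hE]; ring
      rw [h3] at h2
      exact h2
    have hXb := hR τ hτmem
    have hFeq : F (x τ) (w τ) = d (x τ) (w τ) (x τ) (w τ) := (hd.2.1 (x τ) (w τ) hwτ).symm
    have hEτpos := hEpos τ
    -- uncurried function for Lipschitz estimates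
    set f : ((Fin n → ℝ) × (Fin m → ℝ)) × ((Fin n → ℝ) × (Fin m → ℝ)) → (Fin n → ℝ) :=
      fun p => d p.1.1 p.1.2 p.2.1 p.2.2 with hf
    have hgoodl : ∀ j, a τ j - E τ ≤ x τ j := fun j => (hgoodτ j).1
    have hgoodu : ∀ j, x τ j ≤ ah τ j + E τ := fun j => (hgoodτ j).2
    rcases hi with hlow | hup
    · -- lower crossing at coordinate i
      have heqi : x τ i = a τ i - E τ := le_antisymm hlow (hgoodτ i).1
      have hτpos : 0 < τ := by
        rcases eq_or_lt_of_le hτmem.1 with h0 | h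
        · exfalso
          rw [← h0] at heqi
          have hE0 : E 0 = ε := by simp [hE]
          rw [hE0] at heqi
          linarith [h0l i]
        · exact h
      set z : Fin n → ℝ := fun j => max (x τ j) (ah τ j) with hz
      set y : Fin n → ℝ := fun j => if j = i then x τ j else min (x τ j) (a τ j) with hy
      have st1 : d (x τ) wl (x τ) (w τ) i ≤ d (x τ) (w τ) (x τ) (w τ) i :=
        dw_mono hd i (x τ) (x τ) hwlI hwτ hwτ hwτ.1
      have st2 : d (x τ) wl (x τ) wu i ≤ d (x τ) wl (x τ) (w τ) i :=
        dwh_anti hd i (x τ) (x τ) hwτ hwuI hwlI hwτ.2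
      have st3 : d (x τ) wl z wu i ≤ d (x τ) wl (x τ) wu i :=
        dxh_anti hd i (x τ) hwlI hwuI (fun j => le_max_left _ _)
      have hyX : y ≤ x τ := by
        intro j
        by_cases hj : j = i
        · simp [hy, hj]
        · simp only [hy, hj, if_false]; exact min_le_left _ _
      have hyi : y i = x τ i := by simp [hy]
      have st4 : d y wl z wu i ≤ d (x τ) wl z wu i := dx_mono hd i z hwlI hwuI hyX hyi
      -- Lipschitz step
      have hyb : ∀ j, ‖y j‖ ≤ R := by
        intro j
        by_cases hj : j = i
        · simp only [hy, hj, if_true]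
          exact le_trans (norm_le_pi_norm (x τ) i) hXb.1
        · simp only [hy, hj, if_false]
          rcases min_choice (x τ j) (a τ j) with h | h <;> rw [h]
          · exact le_trans (norm_le_pi_norm (x τ) j) hXb.1
          · exact le_trans (norm_le_pi_norm (a τ) j) hXb.2.1
      have hzb : ∀ j, ‖z j‖ ≤ R := by
        intro j
        have hzj : z j = max (x τ j) (ah τ j) := rfl
        rcases max_choice (x τ j) (ah τ j) with h | h <;> rw [hzj, h]
        · exact le_trans (norm_le_pi_norm (x τ) j) hXb.1
        · exact le_trans (norm_le_pi_norm (ah τ) j) hXb.2.2.1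
      have hmemP : ((y, wl), (z, wu)) ∈
          Metric.closedBall (0 : ((Fin n → ℝ) × (Fin m → ℝ)) × ((Fin n → ℝ) × (Fin m → ℝ)))
            (R + 1) := by
        rw [mem_closedBall_zero_iff]
        rw [Prod.norm_def, Prod.norm_def, Prod.norm_def]
        have h1 : ‖y‖ ≤ R := (pi_norm_le_iff_of_nonneg hRnn).2 hyb
        have h2 : ‖z‖ ≤ R := (pi_norm_le_iff_of_nonneg hRnn).2 hzb
        refine max_le (max_le ?_ ?_) (max_le ?_ ?_) <;> simp only [] <;>
          linarith [hXb.2.2.2.1, hXb.2.2.2.2]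
      have hmemQ : ((a τ, wl), (ah τ, wu)) ∈
          Metric.closedBall (0 : ((Fin n → ℝ) × (Fin m → ℝ)) × ((Fin n → ℝ) × (Fin m → ℝ)))
            (R + 1) := by
        rw [mem_closedBall_zero_iff]
        rw [Prod.norm_def, Prod.norm_def, Prod.norm_def]
        refine max_le (max_le ?_ ?_) (max_le ?_ ?_) <;> simp only [] <;>
          linarith [hXb.2.1, hXb.2.2.1, hXb.2.2.2.1, hXb.2.2.2.2]
      have hdyA : dist y (a τ) ≤ E τ := by
        rw [dist_pi_le_iff hEτpos.le]
        intro j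
        rw [Real.dist_eq]
        by_cases hj : j = i
        · subst hj
          rw [hyi, heqi]
          rw [abs_of_nonpos (by linarith)]
          linarith
        · simp only [hy, hj, if_false]
          have h1 : min (x τ j) (a τ j) ≤ a τ j := min_le_right _ _
          have h2 : a τ j - E τ ≤ min (x τ j) (a τ j) :=
            le_min (hgoodl j) (by linarith)
          rw [abs_le]
          constructor <;> linarith
      have hdzAH : dist z (ah τ) ≤ E τ := by
        rw [dist_pi_le_iff hEτpos.le]
        intro j
        rw [Real.dist_eq]
        have h1 : ah τ j ≤ max (x τ j) (ah τ j) := le_max_right _ _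
        have h2 : max (x τ j) (ah τ j) ≤ ah τ j + E τ :=
          max_le (hgoodu j) (by linarith)
        have hzj : z j = max (x τ j) (ah τ j) := rfl
        rw [hzj, abs_le]
        constructor <;> linarith
      have hdist : dist ((y, wl), (z, wu)) ((a τ, wl), (ah τ, wu)) ≤ E τ := by
        rw [Prod.dist_eq, Prod.dist_eq, Prod.dist_eq]
        simp only [dist_self]
        exact max_le (max_le hdyA hEτpos.le) (max_le hdzAH hEτpos.le)
      have hLip := hL.dist_le_mul _ hmemP _ hmemQ
      have hLip2 : dist (d y wl z wu) (d (a τ) wl (ah τ) wu) ≤ (L:ℝ) * E τ := by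
        refine le_trans hLip ?_
        exact mul_le_mul_of_nonneg_left hdist L.2
      have hLipi : |d y wl z wu i - d (a τ) wl (ah τ) wu i| ≤ (L:ℝ) * E τ := by
        have h1 := dist_le_pi_dist (d y wl z wu) (d (a τ) wl (ah τ) wu) i
        rw [Real.dist_eq] at h1
        linarith
      have hchain : d (a τ) wl (ah τ) wu i - (L:ℝ) * E τ ≤ F (x τ) (w τ) i := by
        have h1 := (abs_le.1 hLipi).1
        have h2 : F (x τ) (w τ) i = d (x τ) (w τ) (x τ) (w τ) i := by rw [hFeq]
        linarith [st1, st2, st3, st4]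
      set g : ℝ → ℝ := fun t => x t i - a t i + E t with hg
      have hgd : HasDerivAt g
          (F (x τ) (w τ) i - d (a τ) wl (ah τ) wu i + c * E τ) τ := (hxdi.sub hadi).add hEd
      have hg0 : g τ = 0 := by simp only [hg]; rw [heqi]; ring
      have hgge : ∀ t, 0 ≤ t → t < τ → 0 ≤ g t := by
        intro t h1 h2
        have := (hgoodlt t h1 h2 i).1
        simp only [hg]; linarith
      have hD0 := deriv_nonpos_of_left_nonneg hτpos hgd hg0 hgge
      have hcL : c = (L:ℝ) + 1 := hc
      have h11 : c * E τ = (L:ℝ) * E τ + E τ := by rw [hcL]; ring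
      linarith [hEτpos, hD0, hchain, h11]
    · -- upper crossing at coordinate i
      have heqi : x τ i = ah τ i + E τ := le_antisymm (hgoodτ i).2 hup
      have hτpos : 0 < τ := by
        rcases eq_or_lt_of_le hτmem.1 with h0 | h
        · exfalso
          rw [← h0] at heqi
          have hE0 : E 0 = ε := by simp [hE]
          rw [hE0] at heqi
          linarith [h0u i]
        · exact h
      set z : Fin n → ℝ := fun j => min (x τ j) (a τ j) with hz
      set y : Fin n → ℝ := fun j => if j = i then x τ j else max (x τ j) (ah τ j) with hy
      have st1 : d (x τ) (w τ) (x τ) (w τ) i ≤ d (x τ) wu (x τ) (w τ) i :=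
        dw_mono hd i (x τ) (x τ) hwτ hwuI hwτ hwτ.2
      have st2 : d (x τ) wu (x τ) (w τ) i ≤ d (x τ) wu (x τ) wl i :=
        dwh_anti hd i (x τ) (x τ) hwlI hwτ hwuI hwτ.1
      have st3 : d (x τ) wu (x τ) wl i ≤ d (x τ) wu z wl i :=
        dxh_anti hd i (x τ) hwuI hwlI (fun j => min_le_left _ _)
      have hyX : x τ ≤ y := by
        intro j
        by_cases hj : j = i
        · simp [hy, hj]
        · simp only [hy, hj, if_false]; exact le_max_left _ _
      have hyi : x τ i = y i := by simp [hy]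
      have st4 : d (x τ) wu z wl i ≤ d y wu z wl i := dx_mono hd i z hwuI hwlI hyX hyi
      have hyb : ∀ j, ‖y j‖ ≤ R := by
        intro j
        by_cases hj : j = i
        · simp only [hy, hj, if_true]
          exact le_trans (norm_le_pi_norm (x τ) i) hXb.1
        · simp only [hy, hj, if_false]
          rcases max_choice (x τ j) (ah τ j) with h | h <;> rw [h]
          · exact le_trans (norm_le_pi_norm (x τ) j) hXb.1
          · exact le_trans (norm_le_pi_norm (ah τ) j) hXb.2.2.1
      have hzb : ∀ j, ‖z j‖ ≤ R := by
        intro j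
        have hzj : z j = min (x τ j) (a τ j) := rfl
        rcases min_choice (x τ j) (a τ j) with h | h <;> rw [hzj, h]
        · exact le_trans (norm_le_pi_norm (x τ) j) hXb.1
        · exact le_trans (norm_le_pi_norm (a τ) j) hXb.2.1
      have hmemP : ((y, wu), (z, wl)) ∈
          Metric.closedBall (0 : ((Fin n → ℝ) × (Fin m → ℝ)) × ((Fin n → ℝ) × (Fin m → ℝ)))
            (R + 1) := by
        rw [mem_closedBall_zero_iff]
        rw [Prod.norm_def, Prod.norm_def, Prod.norm_def]
        have h1 : ‖y‖ ≤ R := (pi_norm_le_iff_of_nonneg hRnn).2 hyb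
        have h2 : ‖z‖ ≤ R := (pi_norm_le_iff_of_nonneg hRnn).2 hzb
        refine max_le (max_le ?_ ?_) (max_le ?_ ?_) <;> simp only [] <;>
          linarith [hXb.2.2.2.1, hXb.2.2.2.2]
      have hmemQ : ((ah τ, wu), (a τ, wl)) ∈
          Metric.closedBall (0 : ((Fin n → ℝ) × (Fin m → ℝ)) × ((Fin n → ℝ) × (Fin m → ℝ)))
            (R + 1) := by
        rw [mem_closedBall_zero_iff]
        rw [Prod.norm_def, Prod.norm_def, Prod.norm_def]
        refine max_le (max_le ?_ ?_) (max_le ?_ ?_) <;> simp only [] <;>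
          linarith [hXb.2.1, hXb.2.2.1, hXb.2.2.2.1, hXb.2.2.2.2]
      have hdyAH : dist y (ah τ) ≤ E τ := by
        rw [dist_pi_le_iff hEτpos.le]
        intro j
        rw [Real.dist_eq]
        by_cases hj : j = i
        · subst hj
          rw [← hyi, heqi]
          rw [abs_of_nonneg (by linarith)]
          linarith
        · simp only [hy, hj, if_false]
          have h1 : ah τ j ≤ max (x τ j) (ah τ j) := le_max_right _ _
          have h2 : max (x τ j) (ah τ j) ≤ ah τ j + E τ :=
            max_le (hgoodu j) (by linarith)
          rw [abs_le]
          constructor <;> linarith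
      have hdzA : dist z (a τ) ≤ E τ := by
        rw [dist_pi_le_iff hEτpos.le]
        intro j
        rw [Real.dist_eq]
        have h1 : min (x τ j) (a τ j) ≤ a τ j := min_le_right _ _
        have h2 : a τ j - E τ ≤ min (x τ j) (a τ j) :=
          le_min (hgoodl j) (by linarith)
        have hzj : z j = min (x τ j) (a τ j) := rfl
        rw [hzj, abs_le]
        constructor <;> linarith
      have hdist : dist ((y, wu), (z, wl)) ((ah τ, wu), (a τ, wl)) ≤ E τ := by
        rw [Prod.dist_eq, Prod.dist_eq, Prod.dist_eq]
        simp only [dist_self]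
        exact max_le (max_le hdyAH hEτpos.le) (max_le hdzA hEτpos.le)
      have hLip := hL.dist_le_mul _ hmemP _ hmemQ
      have hLip2 : dist (d y wu z wl) (d (ah τ) wu (a τ) wl) ≤ (L:ℝ) * E τ := by
        refine le_trans hLip ?_
        exact mul_le_mul_of_nonneg_left hdist L.2
      have hLipi : |d y wu z wl i - d (ah τ) wu (a τ) wl i| ≤ (L:ℝ) * E τ := by
        have h1 := dist_le_pi_dist (d y wu z wl) (d (ah τ) wu (a τ) wl) i
        rw [Real.dist_eq] at h1
        linarith
      have hchain : F (x τ) (w τ) i ≤ d (ah τ) wu (a τ) wl i + (L:ℝ) * E τ := by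
        have h1 := (abs_le.1 hLipi).2
        have h2 : F (x τ) (w τ) i = d (x τ) (w τ) (x τ) (w τ) i := by rw [hFeq]
        linarith [st1, st2, st3, st4]
      set g : ℝ → ℝ := fun t => ah t i + E t - x t i with hg
      have hgd : HasDerivAt g
          (d (ah τ) wu (a τ) wl i + c * E τ - F (x τ) (w τ) i) τ := (hahdi.add hEd).sub hxdi
      have hg0 : g τ = 0 := by simp only [hg]; rw [heqi]; ring
      have hgge : ∀ t, 0 ≤ t → t < τ → 0 ≤ g t := by
        intro t h1 h2
        have := (hgoodlt t h1 h2 i).2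
        simp only [hg]; linarith
      have hD0 := deriv_nonpos_of_left_nonneg hτpos hgd hg0 hgge
      have hcL : c = (L:ℝ) + 1 := hc
      have h11 : c * E τ = (L:ℝ) * E τ + E τ := by rw [hcL]; ring
      linarith [hEτpos, hD0, hchain, h11]
  -- let ε → 0
  intro t ht
  have hexpos : 0 < Real.exp (c * t) := Real.exp_pos _
  constructor <;> intro i
  · have h1 : ∀ δ : ℝ, 0 < δ → a t i ≤ x t i + δ := by
      intro δ hδ
      set ε : ℝ := min ε₀ (δ / Real.exp (c * t)) with hε
      have hεpos : 0 < ε := lt_min hε₀pos (by positivity)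
      have h2 := (key ε hεpos (min_le_left _ _) t ht i).1
      have h3 : ε * Real.exp (c * t) ≤ δ := by
        calc ε * Real.exp (c * t) ≤ (δ / Real.exp (c * t)) * Real.exp (c * t) :=
              mul_le_mul_of_nonneg_right (min_le_right _ _) hexpos.le
          _ = δ := by field_simp
      linarith
    linarith [le_of_forall_pos_le_add h1]
  · have h1 : ∀ δ : ℝ, 0 < δ → x t i ≤ ah t i + δ := by
      intro δ hδ
      set ε : ℝ := min ε₀ (δ / Real.exp (c * t)) with hε
      have hεpos : 0 < ε := lt_min hε₀pos (by positivity)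
      have h2 := (key ε hεpos (min_le_left _ _) t ht i).2
      have h3 : ε * Real.exp (c * t) ≤ δ := by
        calc ε * Real.exp (c * t) ≤ (δ / Real.exp (c * t)) * Real.exp (c * t) :=
              mul_le_mul_of_nonneg_right (min_le_right _ _) hexpos.le
          _ = δ := by field_simp
      linarith
    exact le_of_forall_pos_le_add h1

/-- Corollary 1: if `(x_eq, x̂_eq)` (with `x_eq ⪯ x̂_eq`) is an asymptotically
stable equilibrium of the deterministic embedding system with basin of attraction `𝒞`, then
`[x_eq, x̂_eq]` is robustly forward invariant for `ẋ = F(x, w)`, attractive from `[a, â]`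
for every `(a, â) ∈ 𝒞` with `a ⪯ â`, and globally attractive when `𝒯 ⊆ 𝒞`. -/
theorem corollary1_asymptotically_stable_equilibrium
    {n m : ℕ} (wl wu : Fin m → ℝ) (hwlu : wl ≤ wu)
    (F : (Fin n → ℝ) → (Fin m → ℝ) → (Fin n → ℝ))
    (d : (Fin n → ℝ) → (Fin m → ℝ) → (Fin n → ℝ) → (Fin m → ℝ) → (Fin n → ℝ))
    (hd : IsDecompositionFunction wl wu F d)
    (xeq xheq : Fin n → ℝ) (hle : xeq ≤ xheq)
    -- (xeq, xheq) is an equilibrium of the embedding system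
    (heq : d xeq wl xheq wu = 0 ∧ d xheq wu xeq wl = 0)
    (C : Set ((Fin n → ℝ) × (Fin n → ℝ)))
    -- Lyapunov stability of (xeq, xheq) for the embedding system
    (hstab : ∀ U : Set ((Fin n → ℝ) × (Fin n → ℝ)), IsOpen U → (xeq, xheq) ∈ U →
      ∃ V : Set ((Fin n → ℝ) × (Fin n → ℝ)), IsOpen V ∧ (xeq, xheq) ∈ V ∧
        ∀ a ah : ℝ → (Fin n → ℝ), EmbeddingSol wl wu d a ah → (a 0, ah 0) ∈ V →
          ∀ t ∈ Set.Ici (0:ℝ), (a t, ah t) ∈ U)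
    -- from every point of the basin 𝒞 a solution exists ...
    (hbasin_ex : ∀ p ∈ C, ∃ a ah : ℝ → (Fin n → ℝ),
      EmbeddingSol wl wu d a ah ∧ a 0 = p.1 ∧ ah 0 = p.2)
    -- ... and every solution starting in 𝒞 converges to the equilibrium
    (hbasin : ∀ a ah : ℝ → (Fin n → ℝ), EmbeddingSol wl wu d a ah → (a 0, ah 0) ∈ C →
      Filter.Tendsto (fun t => (a t, ah t)) Filter.atTop (nhds (xeq, xheq))) :
    -- [xeq, xheq] is robustly forward invariant for ẋ = F(x, w)
    (∀ T : ℝ, 0 ≤ T →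
      ∀ (x : ℝ → (Fin n → ℝ)) (w : ℝ → (Fin m → ℝ)),
        (∀ t ∈ Set.Icc (0:ℝ) T, w t ∈ Set.Icc wl wu) →
        PiecewiseContinuousOn w (Set.Icc 0 T) →
        (∀ t ∈ Set.Icc (0:ℝ) T, HasDerivAt x (F (x t) (w t)) t) →
        x 0 ∈ Set.Icc xeq xheq →
        ∀ t ∈ Set.Icc (0:ℝ) T, x t ∈ Set.Icc xeq xheq) ∧
    -- [xeq, xheq] is attractive from [a, ah] for every (a, ah) ∈ 𝒞 ∩ 𝒯
    (∀ av ahv : Fin n → ℝ, (av, ahv) ∈ C → av ≤ ahv →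
      ∀ (x : ℝ → (Fin n → ℝ)) (w : ℝ → (Fin m → ℝ)),
        (∀ t ∈ Set.Ici (0:ℝ), w t ∈ Set.Icc wl wu) →
        PiecewiseContinuousOn w (Set.Ici 0) →
        (∀ t ∈ Set.Ici (0:ℝ), HasDerivAt x (F (x t) (w t)) t) →
        x 0 ∈ Set.Icc av ahv →
        ∀ U : Set (Fin n → ℝ), IsOpen U → Set.Icc xeq xheq ⊆ U →
          ∃ T : ℝ, 0 < T ∧ ∀ t : ℝ, T ≤ t → x t ∈ U) ∧
    -- if 𝒯 ⊆ 𝒞 then [xeq, xheq] is globally attractive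
    ({p : (Fin n → ℝ) × (Fin n → ℝ) | p.1 ≤ p.2} ⊆ C →
      ∀ (x : ℝ → (Fin n → ℝ)) (w : ℝ → (Fin m → ℝ)),
        (∀ t ∈ Set.Ici (0:ℝ), w t ∈ Set.Icc wl wu) →
        PiecewiseContinuousOn w (Set.Ici 0) →
        (∀ t ∈ Set.Ici (0:ℝ), HasDerivAt x (F (x t) (w t)) t) →
        ∀ U : Set (Fin n → ℝ), IsOpen U → Set.Icc xeq xheq ⊆ U →
          ∃ T : ℝ, 0 < T ∧ ∀ t : ℝ, T ≤ t → x t ∈ U) := by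
  have hconst : EmbeddingSol wl wu d (fun _ => xeq) (fun _ => xheq) := by
    intro t _
    constructor
    · rw [heq.1]; exact hasDerivAt_const t xeq
    · rw [heq.2]; exact hasDerivAt_const t xheq
  have attract : ∀ av ahv : Fin n → ℝ, (av, ahv) ∈ C → av ≤ ahv →
      ∀ (x : ℝ → (Fin n → ℝ)) (w : ℝ → (Fin m → ℝ)),
        (∀ t ∈ Set.Ici (0:ℝ), w t ∈ Set.Icc wl wu) →
        PiecewiseContinuousOn w (Set.Ici 0) →
        (∀ t ∈ Set.Ici (0:ℝ), HasDerivAt x (F (x t) (w t)) t) →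
        x 0 ∈ Set.Icc av ahv →
        ∀ U : Set (Fin n → ℝ), IsOpen U → Set.Icc xeq xheq ⊆ U →
          ∃ T : ℝ, 0 < T ∧ ∀ t : ℝ, T ≤ t → x t ∈ U := by
    intro av ahv hCmem hle2 x w hw _hpc hx hx0 U hU hsubU
    obtain ⟨a, ah, hsol, ha0, hah0⟩ := hbasin_ex (av, ahv) hCmem
    have htend := hbasin a ah hsol (by rw [ha0, hah0]; exact hCmem)
    have hcomp : ∀ t : ℝ, 0 ≤ t → a t ≤ x t ∧ x t ≤ ah t := by
      intro t ht
      refine comparison wl wu hwlu F d hd a ah hsol t ht x w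
        (fun s hs => hw s hs.1) (fun s hs => hx s hs.1) ?_ ?_ t ⟨ht, le_refl t⟩
      · rw [ha0]; exact hx0.1
      · rw [hah0]; exact hx0.2
    have hcpt : IsCompact (Set.Icc xeq xheq) := isCompact_Icc
    have hIccne : (Set.Icc xeq xheq).Nonempty := ⟨xeq, le_refl _, hle⟩
    obtain ⟨δ, hδpos, hδ⟩ := hcpt.exists_thickening_subset_open hU hsubU
    have hev : ∀ᶠ t in Filter.atTop, dist (a t, ah t) (xeq, xheq) < δ/2 :=
      Metric.tendsto_nhds.1 htend (δ/2) (by positivity)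
    obtain ⟨T', hT'⟩ := Filter.eventually_atTop.1 hev
    refine ⟨max T' 1, lt_of_lt_of_le zero_lt_one (le_max_right T' 1), ?_⟩
    intro t hTt
    have htge : T' ≤ t := le_trans (le_max_left _ _) hTt
    have h1t : (0:ℝ) ≤ t :=
      le_trans zero_le_one (le_trans (le_max_right _ _) hTt)
    have hda := hT' t htge
    rw [Prod.dist_eq] at hda
    have hdal : dist (a t) xeq < δ/2 := lt_of_le_of_lt (le_max_left _ _) hda
    have hdau : dist (ah t) xheq < δ/2 := lt_of_le_of_lt (le_max_right _ _) hda
    have hax := hcomp t h1t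
    set p : Fin n → ℝ := fun j => max (xeq j) (min (x t j) (xheq j)) with hp
    have hpI : p ∈ Set.Icc xeq xheq := by
      constructor
      · intro j; exact le_max_left _ _
      · intro j; exact max_le (hle j) (min_le_right _ _)
    have hdxp : dist (x t) p ≤ δ/2 := by
      rw [dist_pi_le_iff (by positivity : (0:ℝ) ≤ δ/2)]
      intro j
      have hpj : p j = max (xeq j) (min (x t j) (xheq j)) := rfl
      have haj : |a t j - xeq j| ≤ dist (a t) xeq := by
        have := dist_le_pi_dist (a t) xeq j
        rwa [Real.dist_eq] at this
      have hahj : |ah t j - xheq j| ≤ dist (ah t) xheq := by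
        have := dist_le_pi_dist (ah t) xheq j
        rwa [Real.dist_eq] at this
      have hl1 : xeq j - δ/2 < a t j := by
        have := (abs_le.1 haj).1; linarith
      have hu1 : ah t j < xheq j + δ/2 := by
        have := (abs_le.1 hahj).2; linarith
      have hxl : xeq j - δ/2 < x t j := lt_of_lt_of_le hl1 (hax.1 j)
      have hxu : x t j < xheq j + δ/2 := lt_of_le_of_lt (hax.2 j) hu1
      rw [Real.dist_eq, hpj]
      rcases le_or_gt (xeq j) (x t j) with h1 | h1
      · rcases le_or_gt (x t j) (xheq j) with h2 | h2
        · rw [min_eq_left h2, max_eq_right h1]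
          simp [abs_of_nonneg, sub_self]
          linarith
        · rw [min_eq_right h2.le, max_eq_right (hle j)]
          rw [abs_of_nonneg (by linarith)]
          linarith
      · have h3 : min (x t j) (xheq j) = x t j := min_eq_left (by linarith [hle j])
        rw [h3, max_eq_left h1.le]
        rw [abs_of_nonpos (by linarith)]
        linarith
    have hmem : x t ∈ Metric.thickening δ (Set.Icc xeq xheq) :=
      Metric.mem_thickening_iff.2 ⟨p, hpI, lt_of_le_of_lt hdxp (by linarith)⟩
    exact hδ hmem
  refine ⟨?_, attract, ?_⟩
  · intro T hT x w hw _hpc hx hx0 t ht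
    have := comparison wl wu hwlu F d hd (fun _ => xeq) (fun _ => xheq) hconst T hT x w
      hw hx hx0.1 hx0.2 t ht
    exact ⟨this.1, this.2⟩
  · intro hTC x w hw hpc hx U hU hsubU
    exact attract (x 0) (x 0) (hTC (le_refl (x 0))) (le_refl _) x w hw hpc hx
      ⟨le_refl _, le_refl _⟩ U hU hsubU
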